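/- Suppose that for every λ ≥ 0, φ^λ = (w^λ, b^λ) is a λ-regularized upper envelope. Then liminf_{λ→∞} b^λ ≥ G*. -/
import Mathlib


theorem stmt_5
    {W : Type*} [NormedAddCommGroup W] [NormedSpace ℝ W]
    {S : Type*}
    (f : W → S → ℝ)
    (hf_cont : ∀ s : S, Continuous fun w => f w s)
    (hf_zero : ∀ s : S, f 0 s = 0)
    (m : ℕ) (hm : 0 < m)
    (s : Fin m → S) (G : Fin m → ℝ)
    (Gstar : ℝ)
    (hGstar : Gstar = Finset.univ.sup' ⟨⟨0, hm⟩, Finset.mem_univ _⟩ G)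
    (φ : ℝ → W × ℝ)
    (hfeas : ∀ lam : ℝ, 0 ≤ lam → ∀ i : Fin m, G i ≤ f (φ lam).1 (s i) + (φ lam).2)
    (hmin : ∀ lam : ℝ, 0 ≤ lam → ∀ ψ : W × ℝ,
      (∀ i : Fin m, G i ≤ f ψ.1 (s i) + ψ.2) →
      (∑ i, (f (φ lam).1 (s i) + (φ lam).2 - G i) ^ 2) + lam * ‖(φ lam).1‖ ^ 2 ≤
        (∑ i, (f ψ.1 (s i) + ψ.2 - G i) ^ 2) + lam * ‖ψ.1‖ ^ 2) :
    Gstar ≤ Filter.liminf (fun lam : ℝ => (φ lam).2) Filter.atTop := by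
  obtain ⟨i0, -, hi0⟩ := Finset.exists_mem_eq_sup' (⟨⟨0, hm⟩, Finset.mem_univ _⟩ :
    (Finset.univ : Finset (Fin m)).Nonempty) G
  have hGi0 : Gstar = G i0 := by rw [hGstar, hi0]
  set H : ℝ := ∑ i, (Gstar - G i) ^ 2 with hHdef
  have hGle : ∀ i, G i ≤ Gstar := by
    intro i; rw [hGstar]; exact Finset.le_sup' G (Finset.mem_univ i)
  have hkey : ∀ lam : ℝ, 0 ≤ lam → lam * ‖(φ lam).1‖ ^ 2 ≤ H := by
    intro lam hlam
    have hfeas0 : ∀ i : Fin m, G i ≤ f ((0 : W), Gstar).1 (s i) + ((0 : W), Gstar).2 := by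
      intro i; simp only [hf_zero]; simpa using hGle i
    have h := hmin lam hlam ((0 : W), Gstar) hfeas0
    simp only [hf_zero, norm_zero] at h
    have hsum : 0 ≤ ∑ i, (f (φ lam).1 (s i) + (φ lam).2 - G i) ^ 2 :=
      Finset.sum_nonneg fun i _ => sq_nonneg _
    have hre : (∑ i, ((0:ℝ) + Gstar - G i) ^ 2) = H := by
      rw [hHdef]; congr 1; ext i; ring
    nlinarith [h, hre]
  have hsumle : ∀ lam : ℝ, 0 ≤ lam →
      (∑ i, (f (φ lam).1 (s i) + (φ lam).2 - G i) ^ 2) ≤ H := by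
    intro lam hlam
    have hfeas0 : ∀ i : Fin m, G i ≤ f ((0 : W), Gstar).1 (s i) + ((0 : W), Gstar).2 := by
      intro i; simp only [hf_zero]; simpa using hGle i
    have h := hmin lam hlam ((0 : W), Gstar) hfeas0
    simp only [hf_zero, norm_zero] at h
    have hre : (∑ i, ((0:ℝ) + Gstar - G i) ^ 2) = H := by
      rw [hHdef]; congr 1; ext i; ring
    nlinarith [h, hre, norm_nonneg (φ lam).1, sq_nonneg ‖(φ lam).1‖,
      mul_nonneg hlam (sq_nonneg ‖(φ lam).1‖)]
  have hw0 : Filter.Tendsto (fun lam => (φ lam).1) Filter.atTop (nhds 0) := by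
    rw [NormedAddCommGroup.tendsto_nhds_zero]
    intro ε hε
    filter_upwards [Filter.eventually_gt_atTop (max 0 (H / ε ^ 2))] with lam hlam
    have hlam0 : 0 < lam := lt_of_le_of_lt (le_max_left _ _) hlam
    have h1 : lam * ‖(φ lam).1‖ ^ 2 ≤ H := hkey lam hlam0.le
    have h2 : H / ε ^ 2 < lam := lt_of_le_of_lt (le_max_right _ _) hlam
    have h3 : H < lam * ε ^ 2 := by
      have := (div_lt_iff₀ (by positivity : (0:ℝ) < ε ^ 2)).mp h2
      nlinarith
    have h4 : ‖(φ lam).1‖ ^ 2 < ε ^ 2 :=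
      lt_of_mul_lt_mul_left (by linarith) hlam0.le
    exact lt_of_pow_lt_pow_left₀ 2 hε.le h4
  have hft : Filter.Tendsto (fun lam => f (φ lam).1 (s i0)) Filter.atTop (nhds 0) := by
    have hc := (hf_cont (s i0)).tendsto 0
    rw [hf_zero] at hc
    exact hc.comp hw0
  have hg : Filter.Tendsto (fun lam => Gstar - f (φ lam).1 (s i0)) Filter.atTop (nhds Gstar) := by
    simpa using tendsto_const_nhds.sub hft
  have hle : ∀ᶠ lam in Filter.atTop, Gstar - f (φ lam).1 (s i0) ≤ (φ lam).2 := by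
    filter_upwards [Filter.eventually_ge_atTop (0:ℝ)] with lam hlam
    have := hfeas lam hlam i0
    rw [hGi0]; linarith
  have hbdd : Filter.IsBoundedUnder (· ≥ ·) Filter.atTop (fun lam : ℝ => (φ lam).2) := by
    refine ⟨Gstar - 1, ?_⟩
    rw [Filter.eventually_map]
    have hg1 : ∀ᶠ lam in Filter.atTop, Gstar - 1 ≤ Gstar - f (φ lam).1 (s i0) := by
      exact hg.eventually (eventually_ge_nhds (by linarith : Gstar - 1 < Gstar))
    filter_upwards [hg1, hle] with lam h1 h2
    exact le_trans h1 h2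
  have hub : ∀ᶠ lam in Filter.atTop, (φ lam).2 ≤ Gstar + Real.sqrt H + 1 := by
    filter_upwards [Filter.eventually_ge_atTop (0:ℝ),
      hft.eventually (eventually_ge_nhds (show (-1:ℝ) < 0 by norm_num))] with lam h0 h1
    have hterm0 : 0 ≤ f (φ lam).1 (s i0) + (φ lam).2 - G i0 := by
      have := hfeas lam h0 i0; linarith
    have hterm2 : (f (φ lam).1 (s i0) + (φ lam).2 - G i0) ^ 2 ≤ H :=
      le_trans (Finset.single_le_sum (f := fun i => (f (φ lam).1 (s i) + (φ lam).2 - G i) ^ 2)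
        (fun i _ => sq_nonneg _) (Finset.mem_univ i0))
        (hsumle lam h0)
    have hterm : f (φ lam).1 (s i0) + (φ lam).2 - G i0 ≤ Real.sqrt H := by
      nlinarith [Real.sq_sqrt (le_trans (sq_nonneg _) hterm2), Real.sqrt_nonneg H]
    rw [hGi0]
    linarith
  have hcob : Filter.IsCoboundedUnder (· ≥ ·) Filter.atTop (fun lam : ℝ => (φ lam).2) :=
    Filter.isCoboundedUnder_ge_of_eventually_le Filter.atTop hub
  calc Gstar = Filter.liminf (fun lam => Gstar - f (φ lam).1 (s i0)) Filter.atTop :=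
        hg.liminf_eq.symm
    _ ≤ Filter.liminf (fun lam : ℝ => (φ lam).2) Filter.atTop :=
        Filter.liminf_le_liminf hle hg.isBoundedUnder_ge hcob
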